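/- Let X_1, …, X_n be independent real random variables and S, R > 0 constants such that E[|X_i|^k] ≤ k!·S²·R^{k−2}/2 for every i ∈ {1,…,n} and every integer k ≥ 2. Then for every t ≥ 0, P[|Σ_{i=1}^n (X_i − E[X_i])| ≥ t] ≤ 2·exp(−t² / (2(n·S² + R·t))). -/

import Mathlib

open MeasureTheory ProbabilityTheory
open scoped ENNReal


lemma exp_tail_eq (u : ℝ) :
    Real.exp u - 1 - u = ∑' k : ℕ, u ^ (k + 2) / (k + 2).factorial := by
  have hs := Real.summable_pow_div_factorial u
  have h := hs.sum_add_tsum_nat_add 2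
  rw [Real.exp_eq_exp_ℝ, NormedSpace.exp_eq_tsum_div]
  simp [Finset.sum_range_succ] at h ⊢
  linarith

lemma summable_tail (u : ℝ) : Summable (fun k : ℕ => u ^ (k + 2) / (k + 2).factorial) :=
  (summable_nat_add_iff 2).mpr (Real.summable_pow_div_factorial u)

-- series bound for the g-integral
lemma g_lintegral_bound {Ω : Type*} [MeasurableSpace Ω] (μ : Measure Ω) [IsProbabilityMeasure μ]
    (X : Ω → ℝ) (S R l : ℝ) (hS : 0 < S) (hR : 0 < R) (hl : 0 ≤ l) (hlR : l * R < 1)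
    (hmeas : Measurable X)
    (hmom : ∀ k : ℕ, 2 ≤ k → ∫⁻ ω, ENNReal.ofReal (|X ω| ^ k) ∂μ
        ≤ ENNReal.ofReal ((k.factorial : ℝ) * S ^ 2 * R ^ (k - 2) / 2)) :
    ∫⁻ ω, ENNReal.ofReal (Real.exp (l * |X ω|) - 1 - l * |X ω|) ∂μ
      ≤ ENNReal.ofReal (l ^ 2 * S ^ 2 / (2 * (1 - l * R))) := by
  have h1lR : 0 < 1 - l * R := by linarith
  have hpt : ∀ ω, ENNReal.ofReal (Real.exp (l * |X ω|) - 1 - l * |X ω|)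
      = ∑' k : ℕ, ENNReal.ofReal ((l ^ (k + 2) / (k + 2).factorial) * |X ω| ^ (k + 2)) := by
    intro ω
    rw [exp_tail_eq]
    rw [ENNReal.ofReal_tsum_of_nonneg]
    · congr 1; ext k; congr 1; rw [mul_pow]; ring
    · intro k
      positivity
    · exact summable_tail _
  calc ∫⁻ ω, ENNReal.ofReal (Real.exp (l * |X ω|) - 1 - l * |X ω|) ∂μ
      = ∑' k : ℕ, ∫⁻ ω, ENNReal.ofReal ((l ^ (k + 2) / (k + 2).factorial) * |X ω| ^ (k + 2)) ∂μ := by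
        simp_rw [hpt]
        rw [lintegral_tsum]
        intro k
        exact (ENNReal.measurable_ofReal.comp ((hmeas.abs.pow_const _).const_mul _)).aemeasurable
    _ ≤ ∑' k : ℕ, ENNReal.ofReal (l ^ 2 * S ^ 2 / 2) * ENNReal.ofReal ((l * R) ^ k) := by
        refine ENNReal.tsum_le_tsum fun k => ?_
        have hc : (0:ℝ) ≤ l ^ (k + 2) / (k + 2).factorial := by positivity
        calc ∫⁻ ω, ENNReal.ofReal ((l ^ (k + 2) / (k + 2).factorial) * |X ω| ^ (k + 2)) ∂μ
            = ENNReal.ofReal (l ^ (k + 2) / (k + 2).factorial)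
                * ∫⁻ ω, ENNReal.ofReal (|X ω| ^ (k + 2)) ∂μ := by
              simp_rw [ENNReal.ofReal_mul hc]
              rw [lintegral_const_mul' _ _ ENNReal.ofReal_ne_top]
          _ ≤ ENNReal.ofReal (l ^ (k + 2) / (k + 2).factorial)
                * ENNReal.ofReal (((k + 2).factorial : ℝ) * S ^ 2 * R ^ (k + 2 - 2) / 2) := by
              exact mul_le_mul_right (hmom (k + 2) (by omega)) _
          _ = ENNReal.ofReal (l ^ 2 * S ^ 2 / 2) * ENNReal.ofReal ((l * R) ^ k) := by
              rw [← ENNReal.ofReal_mul hc, ← ENNReal.ofReal_mul (by positivity)]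
              congr 1
              have hfac : ((k + 2).factorial : ℝ) ≠ 0 := Nat.cast_ne_zero.mpr (k + 2).factorial_ne_zero
              have : k + 2 - 2 = k := by omega
              rw [this]
              field_simp
              ring
    _ ≤ ENNReal.ofReal (l ^ 2 * S ^ 2 / (2 * (1 - l * R))) := by
        rw [ENNReal.tsum_mul_left]
        simp_rw [ENNReal.ofReal_pow (by positivity : (0:ℝ) ≤ l * R)]
        rw [ENNReal.tsum_geometric]
        have h1 : (1 : ℝ≥0∞) - ENNReal.ofReal (l * R) = ENNReal.ofReal (1 - l * R) := by
          rw [ENNReal.ofReal_sub _ (by positivity), ENNReal.ofReal_one]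
        rw [h1, ← ENNReal.ofReal_inv_of_pos h1lR, ← ENNReal.ofReal_mul (by positivity)]
        apply ENNReal.ofReal_le_ofReal
        apply le_of_eq
        field_simp


lemma exp_le_key (v : ℝ) :
    Real.exp v ≤ 1 + v + (Real.exp |v| - 1 - |v|) := by
  rcases le_or_gt 0 v with h | h
  · rw [abs_of_nonneg h]; linarith
  · rw [abs_of_neg h]
    have hs : Real.sinh v ≤ v := by
      have := Real.self_le_sinh_iff.mpr (neg_nonneg.mpr h.le)
      have h2 := Real.sinh_neg v
      linarith
    rw [Real.sinh_eq] at hs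
    linarith

lemma tail_nonneg (u : ℝ) : 0 ≤ Real.exp u - 1 - u := by
  have := Real.add_one_le_exp u; linarith

section
variable {Ω : Type*} [MeasurableSpace Ω] (μ : Measure Ω) [IsProbabilityMeasure μ]
  (X : Ω → ℝ) (S R l : ℝ)

-- integrability of X from the second moment
lemma integrable_of_mom (hS : 0 < S) (hmeas : Measurable X)
    (hmom2 : ∫⁻ ω, ENNReal.ofReal (|X ω| ^ 2) ∂μ
        ≤ ENNReal.ofReal (((2:ℕ).factorial : ℝ) * S ^ 2 * R ^ (2 - 2) / 2)) :
    Integrable X μ := by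
  refine ⟨hmeas.aestronglyMeasurable, ?_⟩
  rw [HasFiniteIntegral]
  calc ∫⁻ ω, ‖X ω‖₊ ∂μ ≤ ∫⁻ ω, (1 + ENNReal.ofReal (|X ω| ^ 2)) ∂μ := by
        refine lintegral_mono fun ω => ?_
        calc (‖X ω‖₊ : ℝ≥0∞) = ENNReal.ofReal |X ω| := Real.enorm_eq_ofReal_abs _
          _ ≤ ENNReal.ofReal (1 + |X ω| ^ 2) := by
              apply ENNReal.ofReal_le_ofReal; nlinarith [abs_nonneg (X ω), sq_nonneg (|X ω| - 1)]
          _ = 1 + ENNReal.ofReal (|X ω| ^ 2) := by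
              rw [ENNReal.ofReal_add zero_le_one (by positivity), ENNReal.ofReal_one]
    _ = 1 + ∫⁻ ω, ENNReal.ofReal (|X ω| ^ 2) ∂μ := by
        rw [lintegral_add_left measurable_const, lintegral_const, one_mul, measure_univ]
    _ < ⊤ := by
        refine ENNReal.add_lt_top.mpr ⟨ENNReal.one_lt_top, lt_of_le_of_lt hmom2 ENNReal.ofReal_lt_top⟩

lemma mgf_bound_of_mom (hS : 0 < S) (hR : 0 < R) (hl : 0 ≤ l) (hlR : l * R < 1)
    (hmeas : Measurable X)
    (hmom : ∀ k : ℕ, 2 ≤ k → ∫⁻ ω, ENNReal.ofReal (|X ω| ^ k) ∂μ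
        ≤ ENNReal.ofReal ((k.factorial : ℝ) * S ^ 2 * R ^ (k - 2) / 2))
    (hg : ∫⁻ ω, ENNReal.ofReal (Real.exp (l * |X ω|) - 1 - l * |X ω|) ∂μ
      ≤ ENNReal.ofReal (l ^ 2 * S ^ 2 / (2 * (1 - l * R)))) :
    Integrable (fun ω => Real.exp (l * (X ω - ∫ ω', X ω' ∂μ))) μ ∧
      mgf (fun ω => X ω - ∫ ω', X ω' ∂μ) μ l
        ≤ Real.exp (l ^ 2 * S ^ 2 / (2 * (1 - l * R))) := by
  have h1lR : 0 < 1 - l * R := by linarith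
  set B : ℝ := l ^ 2 * S ^ 2 / (2 * (1 - l * R)) with hB
  have hBnn : 0 ≤ B := by positivity
  have hX : Integrable X μ := integrable_of_mom μ X S R hS hmeas (hmom 2 le_rfl)
  set c : ℝ := ∫ ω', X ω' ∂μ with hc
  -- g function
  set g : Ω → ℝ := fun ω => Real.exp (l * |X ω|) - 1 - l * |X ω| with hgdef
  have hgmeas : Measurable g := by
    apply Measurable.sub
    apply Measurable.sub
    · exact (hmeas.abs.const_mul l).exp
    · exact measurable_const
    · exact hmeas.abs.const_mul l
  have hgnn : ∀ ω, 0 ≤ g ω := fun ω => tail_nonneg _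
  have hgint : Integrable g μ := by
    refine ⟨hgmeas.aestronglyMeasurable, ?_⟩
    rw [HasFiniteIntegral]
    calc ∫⁻ ω, ‖g ω‖₊ ∂μ = ∫⁻ ω, ENNReal.ofReal (g ω) ∂μ := by
          simp_rw [← enorm_eq_nnnorm, Real.enorm_eq_ofReal (hgnn _)]
      _ ≤ ENNReal.ofReal B := hg
      _ < ⊤ := ENNReal.ofReal_lt_top
  have hEg : ∫ ω, g ω ∂μ ≤ B := by
    rw [integral_eq_lintegral_of_nonneg_ae (Filter.Eventually.of_forall hgnn)
      hgmeas.aestronglyMeasurable]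
    exact ENNReal.toReal_le_of_le_ofReal hBnn hg
  -- pointwise bound
  have hpt : ∀ ω, Real.exp (l * X ω) ≤ 1 + l * X ω + g ω := by
    intro ω
    have h := exp_le_key (l * X ω)
    rwa [abs_mul, abs_of_nonneg hl] at h
  -- integrability of exp(l * X)
  have hexpint : Integrable (fun ω => Real.exp (l * X ω)) μ := by
    refine ⟨((hmeas.const_mul l).exp).aestronglyMeasurable, ?_⟩
    rw [HasFiniteIntegral]
    calc ∫⁻ ω, ‖Real.exp (l * X ω)‖₊ ∂μ
        = ∫⁻ ω, ENNReal.ofReal (Real.exp (l * X ω)) ∂μ := by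
          simp_rw [← enorm_eq_nnnorm, Real.enorm_eq_ofReal (Real.exp_nonneg _)]
      _ ≤ ∫⁻ ω, (1 + ENNReal.ofReal (l * |X ω|) + ENNReal.ofReal (g ω)) ∂μ := by
          refine lintegral_mono fun ω => ?_
          have h2 : Real.exp (l * X ω) ≤ 1 + l * |X ω| + g ω := by
            have := hpt ω
            have h3 : l * X ω ≤ l * |X ω| := by
              apply mul_le_mul_of_nonneg_left (le_abs_self _) hl
            linarith
          calc ENNReal.ofReal (Real.exp (l * X ω)) ≤ ENNReal.ofReal (1 + l * |X ω| + g ω) :=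
                ENNReal.ofReal_le_ofReal h2
            _ ≤ 1 + ENNReal.ofReal (l * |X ω|) + ENNReal.ofReal (g ω) := by
                rw [ENNReal.ofReal_add (by positivity) (hgnn ω),
                  ENNReal.ofReal_add zero_le_one (by positivity), ENNReal.ofReal_one]
      _ < ⊤ := by
          rw [lintegral_add_right _ hgmeas.ennreal_ofReal,
            lintegral_add_left measurable_const, lintegral_const, one_mul, measure_univ]
          refine ENNReal.add_lt_top.mpr ⟨ENNReal.add_lt_top.mpr ⟨ENNReal.one_lt_top, ?_⟩,
            lt_of_le_of_lt hg ENNReal.ofReal_lt_top⟩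
          have : ∀ ω, ENNReal.ofReal (l * |X ω|) = ENNReal.ofReal l * ‖X ω‖₊ := by
            intro ω
            rw [ENNReal.ofReal_mul hl, ← enorm_eq_nnnorm, Real.enorm_eq_ofReal_abs]
          simp_rw [this]
          rw [lintegral_const_mul' _ _ ENNReal.ofReal_ne_top]
          exact ENNReal.mul_lt_top ENNReal.ofReal_lt_top hX.2
  -- bound the integral of exp(l X)
  have hEexp : ∫ ω, Real.exp (l * X ω) ∂μ ≤ 1 + l * c + B := by
    have hrhs : Integrable (fun ω => 1 + l * X ω + g ω) μ :=
      ((integrable_const 1).add (hX.const_mul l)).add hgint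
    calc ∫ ω, Real.exp (l * X ω) ∂μ ≤ ∫ ω, (1 + l * X ω + g ω) ∂μ :=
          integral_mono hexpint hrhs hpt
      _ = 1 + l * c + ∫ ω, g ω ∂μ := by
          have e1 : ∫ ω, (1 + l * X ω + g ω) ∂μ
              = (∫ ω, (1 + l * X ω) ∂μ) + ∫ ω, g ω ∂μ :=
            integral_add ((integrable_const 1).add (hX.const_mul l)) hgint
          have e2 : ∫ ω, (1 + l * X ω) ∂μ = (∫ _ω, (1:ℝ) ∂μ) + ∫ ω, l * X ω ∂μ :=
            integral_add (integrable_const 1) (hX.const_mul l)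
          rw [e1, e2, integral_const, integral_const_mul, probReal_univ]
          simp [hc]
      _ ≤ 1 + l * c + B := by linarith [hEg]
  -- Integrable exp(l * (X - c))
  have hshift : (fun ω => Real.exp (l * (X ω - c))) = fun ω => Real.exp (-(l * c)) * Real.exp (l * X ω) := by
    ext ω
    rw [← Real.exp_add]
    ring_nf
  constructor
  · rw [hshift]
    exact hexpint.const_mul _
  · rw [mgf]
    calc ∫ ω, Real.exp (l * (X ω - c)) ∂μ
        = Real.exp (-(l * c)) * ∫ ω, Real.exp (l * X ω) ∂μ := by
          rw [hshift, integral_const_mul]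
      _ ≤ Real.exp (-(l * c)) * Real.exp (l * c + B) := by
          refine mul_le_mul_of_nonneg_left ?_ (Real.exp_nonneg _)
          calc ∫ ω, Real.exp (l * X ω) ∂μ ≤ 1 + l * c + B := hEexp
            _ ≤ Real.exp (l * c + B) := by
                have := Real.add_one_le_exp (l * c + B)
                linarith
      _ = Real.exp B := by
          rw [← Real.exp_add]
          ring_nf
end

lemma bernstein_one_tailed
    {Ω : Type*} [MeasurableSpace Ω] (μ : Measure Ω) [IsProbabilityMeasure μ]
    (n : ℕ) (X : Fin n → Ω → ℝ) (S R : ℝ) (hS : 0 < S) (hR : 0 < R)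
    (hmeas : ∀ i, Measurable (X i))
    (hindep : iIndepFun X μ)
    (hmom : ∀ (i : Fin n) (k : ℕ), 2 ≤ k →
      ∫⁻ ω, ENNReal.ofReal (|X i ω| ^ k) ∂μ
        ≤ ENNReal.ofReal ((k.factorial : ℝ) * S ^ 2 * R ^ (k - 2) / 2))
    (t : ℝ) (ht : 0 ≤ t) :
    μ {ω | t ≤ ∑ i, (X i ω - ∫ ω', X i ω' ∂μ)}
      ≤ ENNReal.ofReal (Real.exp (-t ^ 2 / (2 * (n * S ^ 2 + R * t)))) := by
  rcases eq_or_lt_of_le ht with rfl | htpos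
  · have he : Real.exp (-(0:ℝ) ^ 2 / (2 * (n * S ^ 2 + R * 0))) = 1 := by norm_num
    rw [he, ENNReal.ofReal_one]
    exact prob_le_one
  rcases Nat.eq_zero_or_pos n with rfl | hn
  · have : {ω : Ω | t ≤ ∑ i : Fin 0, (X i ω - ∫ ω', X i ω' ∂μ)} = ∅ := by
      ext ω; simp [not_le, htpos]
    rw [this]
    simp
  · set D : ℝ := n * S ^ 2 + R * t with hD
    have hDpos : 0 < D := by
      have : (0:ℝ) < n := by exact_mod_cast hn
      have := mul_pos (mul_pos hR htpos) (by norm_num : (0:ℝ) < 1)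
      positivity
    set l : ℝ := t / D with hl
    have hlpos : 0 < l := div_pos htpos hDpos
    have hlR : l * R < 1 := by
      rw [hl, div_mul_eq_mul_div, div_lt_one hDpos]
      have hnS : (0:ℝ) < n * S ^ 2 := by
        have : (0:ℝ) < n := by exact_mod_cast hn
        positivity
      rw [hD]; linarith [mul_comm t R]
    set c : Fin n → ℝ := fun i => ∫ ω', X i ω' ∂μ with hc
    set Y : Fin n → Ω → ℝ := fun i ω => X i ω - c i with hY
    have hYmeas : ∀ i, Measurable (Y i) := fun i => (hmeas i).sub measurable_const
    have hYindep : iIndepFun Y μ :=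
      hindep.comp (fun i x => x - c i) (fun i => measurable_id.sub measurable_const)
    have haux : ∀ i : Fin n, Integrable (fun ω => Real.exp (l * Y i ω)) μ ∧
        mgf (Y i) μ l ≤ Real.exp (l ^ 2 * S ^ 2 / (2 * (1 - l * R))) := fun i =>
      mgf_bound_of_mom μ (X i) S R l hS hR hlpos.le hlR (hmeas i) (hmom i)
        (g_lintegral_bound μ (X i) S R l hS hR hlpos.le hlR (hmeas i) (hmom i))
    set B : ℝ := l ^ 2 * S ^ 2 / (2 * (1 - l * R)) with hB
    have hsumint : Integrable (fun ω => Real.exp (l * (∑ i, Y i) ω)) μ :=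
      hYindep.integrable_exp_mul_sum hYmeas (fun i _ => (haux i).1)
    have hcher := measure_ge_le_exp_mul_mgf (X := ∑ i, Y i) (μ := μ) t hlpos.le hsumint
    have hmgfsum : mgf (∑ i, Y i) μ l ≤ Real.exp (n * B) := by
      rw [hYindep.mgf_sum hYmeas Finset.univ]
      calc ∏ i : Fin n, mgf (Y i) μ l ≤ ∏ _i : Fin n, Real.exp B :=
            Finset.prod_le_prod (fun i _ => mgf_nonneg) (fun i _ => (haux i).2)
        _ = Real.exp B ^ n := by rw [Finset.prod_const, Finset.card_univ, Fintype.card_fin]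
        _ = Real.exp (n * B) := by rw [← Real.exp_nat_mul]
    have hexponent : -l * t + n * B = -t ^ 2 / (2 * D) := by
      have h1 : 1 - l * R = n * S ^ 2 / D := by
        rw [hl]; field_simp; ring
      have hnS : (0:ℝ) < n * S ^ 2 := by
        have : (0:ℝ) < n := by exact_mod_cast hn
        positivity
      rw [hB, h1, hl]
      field_simp
      ring
    have hfinal : (μ {ω | t ≤ (∑ i, Y i) ω}).toReal
        ≤ Real.exp (-t ^ 2 / (2 * D)) := by
      calc (μ {ω | t ≤ (∑ i, Y i) ω}).toReal ≤ Real.exp (-l * t) * mgf (∑ i, Y i) μ l := hcher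
        _ ≤ Real.exp (-l * t) * Real.exp (n * B) :=
            mul_le_mul_of_nonneg_left hmgfsum (Real.exp_nonneg _)
        _ = Real.exp (-l * t + n * B) := (Real.exp_add _ _).symm
        _ = Real.exp (-t ^ 2 / (2 * D)) := by rw [hexponent]
    have hset : {ω : Ω | t ≤ ∑ i, (X i ω - ∫ ω', X i ω' ∂μ)} = {ω | t ≤ (∑ i, Y i) ω} := by
      ext ω; simp [hY, hc, Finset.sum_apply]
    rw [hset]
    rw [← ENNReal.ofReal_toReal (measure_ne_top μ _)]
    exact ENNReal.ofReal_le_ofReal hfinal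

/-- **Two-tailed Bernstein inequality** under the absolute-moment growth condition
`E[|X_i|^k] ≤ k! S² R^(k-2) / 2` for all `k ≥ 2`:
`P[|Σ (X_i - E X_i)| ≥ t] ≤ 2 exp(-t² / (2 (n S² + R t)))` for all `t ≥ 0`. -/
theorem bernstein_two_tailed
    {Ω : Type*} [MeasurableSpace Ω] (μ : Measure Ω) [IsProbabilityMeasure μ]
    (n : ℕ) (X : Fin n → Ω → ℝ) (S R : ℝ) (hS : 0 < S) (hR : 0 < R)
    (hmeas : ∀ i, Measurable (X i))
    (hindep : iIndepFun X μ)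
    (hmom : ∀ (i : Fin n) (k : ℕ), 2 ≤ k →
      ∫⁻ ω, ENNReal.ofReal (|X i ω| ^ k) ∂μ
        ≤ ENNReal.ofReal ((k.factorial : ℝ) * S ^ 2 * R ^ (k - 2) / 2))
    (t : ℝ) (ht : 0 ≤ t) :
    μ {ω | t ≤ |∑ i, (X i ω - ∫ ω', X i ω' ∂μ)|}
      ≤ ENNReal.ofReal (2 * Real.exp (-t ^ 2 / (2 * (n * S ^ 2 + R * t)))) := by
  have hupper := bernstein_one_tailed μ n X S R hS hR hmeas hindep hmom t ht
  have hmeas' : ∀ i, Measurable (fun ω => -(X i ω)) := fun i => (hmeas i).neg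
  have hindep' : iIndepFun (fun i ω => -(X i ω)) μ :=
    hindep.comp (fun _ x => -x) (fun _ => measurable_neg)
  have hmom' : ∀ (i : Fin n) (k : ℕ), 2 ≤ k →
      ∫⁻ ω, ENNReal.ofReal (|(-(X i ω))| ^ k) ∂μ
        ≤ ENNReal.ofReal ((k.factorial : ℝ) * S ^ 2 * R ^ (k - 2) / 2) := by
    intro i k hk
    simpa [abs_neg] using hmom i k hk
  have hlower := bernstein_one_tailed μ n (fun i ω => -(X i ω)) S R hS hR hmeas' hindep'
    hmom' t ht
  have hsetl : {ω : Ω | t ≤ ∑ i, (-(X i ω) - ∫ ω', -(X i ω') ∂μ)}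
      = {ω : Ω | t ≤ -∑ i, (X i ω - ∫ ω', X i ω' ∂μ)} := by
    ext ω
    simp only [Set.mem_setOf_eq, integral_neg, ← Finset.sum_neg_distrib]
    constructor <;> (intro h; convert h using 2; ring_nf)
  rw [hsetl] at hlower
  calc μ {ω | t ≤ |∑ i, (X i ω - ∫ ω', X i ω' ∂μ)|}
      ≤ μ ({ω | t ≤ ∑ i, (X i ω - ∫ ω', X i ω' ∂μ)}
          ∪ {ω | t ≤ -∑ i, (X i ω - ∫ ω', X i ω' ∂μ)}) := by
        apply measure_mono
        intro ω hω
        simp only [Set.mem_setOf_eq, Set.mem_union] at *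
        rcases abs_cases (∑ i, (X i ω - ∫ ω', X i ω' ∂μ)) with ⟨h1, _⟩ | ⟨h1, _⟩
        · left; rwa [h1] at hω
        · right; rwa [h1] at hω
    _ ≤ μ {ω | t ≤ ∑ i, (X i ω - ∫ ω', X i ω' ∂μ)}
          + μ {ω | t ≤ -∑ i, (X i ω - ∫ ω', X i ω' ∂μ)} := measure_union_le _ _
    _ ≤ ENNReal.ofReal (Real.exp (-t ^ 2 / (2 * (n * S ^ 2 + R * t))))
          + ENNReal.ofReal (Real.exp (-t ^ 2 / (2 * (n * S ^ 2 + R * t)))) :=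
        add_le_add hupper hlower
    _ = ENNReal.ofReal (2 * Real.exp (-t ^ 2 / (2 * (n * S ^ 2 + R * t)))) := by
        rw [← ENNReal.ofReal_add (Real.exp_nonneg _) (Real.exp_nonneg _)]
        ring_nf
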